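/- Let p be an odd prime, k an integer, α an integer not divisible by p, and χ a Dirichlet character mod p with χ(−1) = (−1)^k·χ_p(−1). Suppose that for each γ ∈ ℤ/pℤ a function F_γ : ℍ → ℂ is given such that: (i) there are an integer B and coefficients c(γ,·) : ℤ → ℂ vanishing for m < −B such that F_γ(τ) = ∑_{m ∈ ℤ} c(γ,m)·e((m − αγ̃²/p)τ) for all τ ∈ ℍ, the series converging absolutely; (ii) F_{−γ} = (−1)^k·χ_p(−1)·F_γ for all γ; (iii) F_0(−1/τ) = (χ_p(α)·ε_p/√p)·τ^k·∑_{β ∈ ℤ/pℤ} F_β(τ) for all τ ∈ ℍ. If ∑_{γ ∈ (ℤ/pℤ)^×} χ(γ)·F_γ(pτ) = 0 for all τ ∈ ℍ, then F_γ is identically zero for every γ ∈ ℤ/pℤ. (This is the injectivity of the twisted component sum map φ_χ.) -/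

import Mathlib

open Complex Finset

/-- `e(x) = exp(2πix)`. -/
noncomputable def e (x : ℂ) : ℂ := Complex.exp (2 * (Real.pi : ℂ) * Complex.I * x)

/-- `ε_p = 1` if `p ≡ 1 (mod 4)` and `ε_p = i` if `p ≡ 3 (mod 4)`. -/
noncomputable def εp (p : ℕ) : ℂ := if p % 4 = 1 then 1 else Complex.I

lemma e_add (x y : ℂ) : e (x + y) = e x * e y := by
  simp [e, mul_add, Complex.exp_add]

lemma e_int (n : ℤ) : e n = 1 := by
  rw [e, show 2 * (Real.pi : ℂ) * Complex.I * n = n * (2 * Real.pi * Complex.I) by ring]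
  exact Complex.exp_int_mul_two_pi_mul_I n

lemma e_nat_mul (x : ℂ) (n : ℕ) : e (x * n) = e x ^ n := by
  rw [e, e, ← Complex.exp_nat_mul]
  congr 1; ring

lemma e_eq_one_iff (a : ℤ) (p : ℕ) (hp : 0 < p) : e ((a : ℂ) / p) = 1 ↔ (p : ℤ) ∣ a := by
  rw [e, Complex.exp_eq_one_iff]
  constructor
  · rintro ⟨n, hn⟩
    have hπ : (2 * (Real.pi : ℂ) * Complex.I) ≠ 0 := by
      simp [Real.pi_ne_zero, Complex.I_ne_zero]
    have hpc : (p : ℂ) ≠ 0 := Nat.cast_ne_zero.mpr hp.ne'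
    have : (a : ℂ) = n * p := by
      field_simp at hn
      have := mul_left_cancel₀ hπ (by linear_combination (2 * (Real.pi:ℂ) * Complex.I) * hn : (2 * (Real.pi:ℂ) * Complex.I) * a = (2 * (Real.pi:ℂ) * Complex.I) * (n * p))
      exact this
    exact ⟨n, by exact_mod_cast this.trans (mul_comm _ _)⟩
  · rintro ⟨b, rfl⟩
    refine ⟨b, ?_⟩
    have hpc : (p : ℂ) ≠ 0 := Nat.cast_ne_zero.mpr hp.ne'
    field_simp
    push_cast
    ring

lemma sum_e_eq (p : ℕ) (hp : 0 < p) (a : ℤ) :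
    ∑ j ∈ Finset.range p, e ((a : ℂ) * j / p) = if (p : ℤ) ∣ a then (p : ℂ) else 0 := by
  have hterm : ∀ j : ℕ, e ((a : ℂ) * j / p) = e ((a : ℂ) / p) ^ j := by
    intro j
    rw [← e_nat_mul]; congr 1; ring
  by_cases h : (p : ℤ) ∣ a
  · simp only [h, if_true]
    have h1 : e ((a : ℂ) / p) = 1 := (e_eq_one_iff a p hp).mpr h
    simp [hterm, h1]
  · simp only [h, if_false]
    have h1 : e ((a : ℂ) / p) ≠ 1 := fun hc => h ((e_eq_one_iff a p hp).mp hc)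
    have h2 : e ((a : ℂ) / p) ^ p = 1 := by
      have hpc : (p : ℂ) ≠ 0 := Nat.cast_ne_zero.mpr hp.ne'
      rw [← e_nat_mul, div_mul_cancel₀ _ hpc, e_int]
    rw [Finset.sum_congr rfl fun j _ => hterm j, geom_sum_eq h1, h2]
    simp


theorem twisted_component_sum_injective (p : ℕ) [Fact p.Prime] (hp2 : p ≠ 2)
    (k : ℤ) (α : ℤ) (hα : ¬ (p : ℤ) ∣ α) (χ : DirichletCharacter ℂ p)
    (hχ : χ (-1) = (-1 : ℂ) ^ k * (legendreSym p (-1) : ℂ))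
    (F : ZMod p → ℂ → ℂ)
    -- (i) Fourier expansion with coefficients bounded from below, converging absolutely
    (hFourier : ∃ B : ℤ, ∃ c : ZMod p → ℤ → ℂ,
      (∀ γ : ZMod p, ∀ m : ℤ, m < -B → c γ m = 0) ∧
      (∀ γ : ZMod p, ∀ τ : ℂ, 0 < τ.im →
        HasSum (fun m : ℤ => c γ m * e (((m : ℂ) - (α : ℂ) * (γ.val : ℂ) ^ 2 / p) * τ))
          (F γ τ)))
    -- (ii) component symmetry
    (hsymm : ∀ γ : ZMod p, ∀ τ : ℂ, 0 < τ.im →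
      F (-γ) τ = (-1 : ℂ) ^ k * (legendreSym p (-1) : ℂ) * F γ τ)
    -- (iii) transformation of the zero component under S
    (hS : ∀ τ : ℂ, 0 < τ.im →
      F 0 (-1 / τ) = ((legendreSym p α : ℂ) * εp p / Real.sqrt p) * τ ^ k *
        ∑ β : ZMod p, F β τ)
    -- vanishing of the twisted component sum
    (hzero : ∀ τ : ℂ, 0 < τ.im →
      ∑ γ : (ZMod p)ˣ, χ (γ : ZMod p) * F (γ : ZMod p) ((p : ℂ) * τ) = 0) :
    ∀ γ : ZMod p, ∀ τ : ℂ, 0 < τ.im → F γ τ = 0 := by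
  obtain ⟨B, c, hB, hF⟩ := hFourier
  have hpp : p.Prime := Fact.out
  have hp1 : 1 < p := hpp.one_lt
  have hppos : 0 < p := by omega
  have hpc : (p : ℂ) ≠ 0 := Nat.cast_ne_zero.mpr hppos.ne'
  have hpodd : p % 2 = 1 := Nat.odd_iff.mp (hpp.odd_of_ne_two hp2)
  have hTim : ∀ τ : ℂ, 0 < τ.im → 0 < ((p : ℂ) * τ).im := by
    intro τ hτ
    have : ((p : ℂ) * τ).im = (p : ℝ) * τ.im := by
      simp [Complex.mul_im]
    rw [this]
    exact mul_pos (by exact_mod_cast hppos) hτ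
  -- Step A: shift formula
  have hshift : ∀ γ : ZMod p, ∀ τ : ℂ, 0 < τ.im → ∀ j : ℕ,
      F γ ((p : ℂ) * τ + j) = e (-((α : ℂ) * (γ.val : ℂ) ^ 2 * j) / p) * F γ ((p : ℂ) * τ) := by
    intro γ τ hτ j
    have hT := hTim τ hτ
    have hTj : 0 < ((p : ℂ) * τ + (j : ℂ)).im := by
      simpa [Complex.add_im] using hT
    have h1 := hF γ ((p : ℂ) * τ + (j : ℂ)) hTj
    have h2 := (hF γ ((p : ℂ) * τ) hT).mul_left (e (-((α : ℂ) * (γ.val : ℂ) ^ 2 * j) / p))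
    refine h1.unique ?_
    have hfun : ∀ m : ℤ,
        c γ m * e (((m : ℂ) - (α : ℂ) * (γ.val : ℂ) ^ 2 / p) * ((p : ℂ) * τ + j))
        = e (-((α : ℂ) * (γ.val : ℂ) ^ 2 * j) / p) *
          (c γ m * e (((m : ℂ) - (α : ℂ) * (γ.val : ℂ) ^ 2 / p) * ((p : ℂ) * τ))) := by
      intro m
      have key : ((m : ℂ) - (α : ℂ) * (γ.val : ℂ) ^ 2 / p) * ((p : ℂ) * τ + j)
          = ((m : ℂ) - (α : ℂ) * (γ.val : ℂ) ^ 2 / p) * ((p : ℂ) * τ)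
            + (((m * j : ℤ) : ℂ) + -((α : ℂ) * (γ.val : ℂ) ^ 2 * j) / p) := by
        push_cast
        field_simp
        ring
      rw [key, e_add, e_add, e_int]
      ring
    rw [show (fun m : ℤ => c γ m *
        e (((m : ℂ) - (α : ℂ) * (γ.val : ℂ) ^ 2 / p) * ((p : ℂ) * τ + j)))
      = fun m : ℤ => e (-((α : ℂ) * (γ.val : ℂ) ^ 2 * j) / p) *
        (c γ m * e (((m : ℂ) - (α : ℂ) * (γ.val : ℂ) ^ 2 / p) * ((p : ℂ) * τ))) from funext hfun]
    exact h2
  -- Step B: twisted sums with characters e(-α γ² j/p)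
  have hz : ∀ τ : ℂ, 0 < τ.im → ∀ j : ℕ,
      ∑ γ : (ZMod p)ˣ, χ (γ : ZMod p) *
        (e (-((α : ℂ) * (((γ : ZMod p).val : ℂ)) ^ 2 * j) / p) * F (γ : ZMod p) ((p : ℂ) * τ)) = 0 := by
    intro τ hτ j
    have hjim : ((j : ℂ) / (p : ℂ)).im = 0 := by
      rw [show (j : ℂ) / (p : ℂ) = (((j : ℝ) / (p : ℝ) : ℝ) : ℂ) by push_cast; ring]
      exact Complex.ofReal_im _
    have him : 0 < (τ + (j : ℂ) / p).im := by
      rw [Complex.add_im, hjim]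
      simpa using hτ
    have h0 := hzero (τ + (j : ℂ) / p) him
    have harg : (p : ℂ) * (τ + (j : ℂ) / p) = (p : ℂ) * τ + (j : ℂ) := by
      field_simp
    rw [harg] at h0
    rw [← h0]
    refine Finset.sum_congr rfl fun γ _ => ?_
    rw [hshift (γ : ZMod p) τ hτ j]
  -- Step C: each unit component vanishes at p·τ
  have hvx : ∀ x : ZMod p, ((ZMod.val x : ℤ) : ZMod p) = x := by
    intro x
    push_cast
    exact ZMod.natCast_rightInverse x
  have hsq1 : (-1 : ℂ) ^ k * (legendreSym p (-1) : ℂ) * ((-1 : ℂ) ^ k * (legendreSym p (-1) : ℂ)) = 1 := by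
    have hL : ((legendreSym p (-1) : ℤ) : ℂ) * ((legendreSym p (-1) : ℤ) : ℂ) = 1 := by
      have h1 : ((-1 : ℤ) : ZMod p) ≠ 0 := by
        simp only [Int.cast_neg, Int.cast_one, neg_ne_zero]
        exact one_ne_zero
      have h2 := legendreSym.sq_one (p := p) h1
      have h3 : ((legendreSym p (-1) : ℤ) : ℂ) ^ 2 = 1 := by exact_mod_cast congrArg (Int.cast : ℤ → ℂ) h2
      linear_combination h3
    have hk : (-1 : ℂ) ^ k * (-1 : ℂ) ^ k = 1 := by
      rw [← mul_zpow]
      norm_num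
    calc (-1 : ℂ) ^ k * (legendreSym p (-1) : ℂ) * ((-1 : ℂ) ^ k * (legendreSym p (-1) : ℂ))
        = ((-1 : ℂ) ^ k * (-1 : ℂ) ^ k) * (((legendreSym p (-1) : ℤ) : ℂ) * ((legendreSym p (-1) : ℤ) : ℂ)) := by
          ring
      _ = 1 := by rw [hk, hL, one_mul]
  have hunit : ∀ δ : (ZMod p)ˣ, ∀ τ : ℂ, 0 < τ.im → F (δ : ZMod p) ((p : ℂ) * τ) = 0 := by
    intro δ τ hτ
    have hT := hTim τ hτ
    have key : ∑ γ : (ZMod p)ˣ, (χ (γ : ZMod p) * F (γ : ZMod p) ((p : ℂ) * τ)) *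
        (if (p : ℤ) ∣ α * ((ZMod.val (δ : ZMod p) : ℤ) ^ 2 - (ZMod.val (γ : ZMod p) : ℤ) ^ 2)
          then (p : ℂ) else 0) = 0 := by
      have step1 : ∀ γ : (ZMod p)ˣ,
          (χ (γ : ZMod p) * F (γ : ZMod p) ((p : ℂ) * τ)) *
            (if (p : ℤ) ∣ α * ((ZMod.val (δ : ZMod p) : ℤ) ^ 2 - (ZMod.val (γ : ZMod p) : ℤ) ^ 2)
              then (p : ℂ) else 0)
          = ∑ j ∈ Finset.range p, (χ (γ : ZMod p) * F (γ : ZMod p) ((p : ℂ) * τ)) *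
              e (((α * ((ZMod.val (δ : ZMod p) : ℤ) ^ 2 - (ZMod.val (γ : ZMod p) : ℤ) ^ 2) : ℤ) : ℂ)
                * j / p) := by
        intro γ
        rw [← Finset.mul_sum, sum_e_eq p hppos]
      rw [Finset.sum_congr rfl fun γ _ => step1 γ, Finset.sum_comm]
      refine Finset.sum_eq_zero fun j _ => ?_
      have step2 : ∀ γ : (ZMod p)ˣ,
          (χ (γ : ZMod p) * F (γ : ZMod p) ((p : ℂ) * τ)) *
            e (((α * ((ZMod.val (δ : ZMod p) : ℤ) ^ 2 - (ZMod.val (γ : ZMod p) : ℤ) ^ 2) : ℤ) : ℂ)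
              * j / p)
          = e ((α : ℂ) * ((ZMod.val (δ : ZMod p) : ℕ) : ℂ) ^ 2 * j / p) *
            (χ (γ : ZMod p) *
              (e (-((α : ℂ) * ((ZMod.val (γ : ZMod p) : ℕ) : ℂ) ^ 2 * j) / p) *
                F (γ : ZMod p) ((p : ℂ) * τ))) := by
        intro γ
        rw [show ((α * ((ZMod.val (δ : ZMod p) : ℤ) ^ 2 - (ZMod.val (γ : ZMod p) : ℤ) ^ 2) : ℤ) : ℂ)
              * j / p
            = (α : ℂ) * ((ZMod.val (δ : ZMod p) : ℕ) : ℂ) ^ 2 * j / p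
              + -((α : ℂ) * ((ZMod.val (γ : ZMod p) : ℕ) : ℂ) ^ 2 * j) / p by push_cast; ring,
          e_add]
        ring
      rw [Finset.sum_congr rfl fun γ _ => step2 γ, ← Finset.mul_sum]
      rw [hz τ hτ j, mul_zero]
    -- the divisibility condition picks out γ = δ or γ = -δ
    have hP : ∀ γ : (ZMod p)ˣ,
        ((p : ℤ) ∣ α * ((ZMod.val (δ : ZMod p) : ℤ) ^ 2 - (ZMod.val (γ : ZMod p) : ℤ) ^ 2))
          ↔ (γ = δ ∨ γ = -δ) := by
      intro γ
      have hprime : Prime (p : ℤ) := Nat.prime_iff_prime_int.mp hpp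
      rw [hprime.dvd_mul]
      have hiff : ((p : ℤ) ∣ (ZMod.val (δ : ZMod p) : ℤ) ^ 2 - (ZMod.val (γ : ZMod p) : ℤ) ^ 2)
          ↔ ((δ : ZMod p) - (γ : ZMod p)) * ((δ : ZMod p) + (γ : ZMod p)) = 0 := by
        rw [← ZMod.intCast_zmod_eq_zero_iff_dvd]
        constructor
        · intro h
          have h' : ((ZMod.val (δ : ZMod p) : ℤ) : ZMod p) ^ 2
              - ((ZMod.val (γ : ZMod p) : ℤ) : ZMod p) ^ 2 = 0 := by
            push_cast at h ⊢
            exact_mod_cast h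
          rw [hvx, hvx] at h'
          linear_combination h'
        · intro h
          have h' : ((ZMod.val (δ : ZMod p) : ℤ) : ZMod p) ^ 2
              - ((ZMod.val (γ : ZMod p) : ℤ) : ZMod p) ^ 2 = 0 := by
            rw [hvx, hvx]
            linear_combination h
          push_cast at h' ⊢
          exact_mod_cast h'
      rw [hiff]
      constructor
      · rintro (h | h)
        · exact absurd h hα
        · rcases mul_eq_zero.mp h with h1 | h1
          · left
            exact Units.ext (by linear_combination -h1)
          · right
            refine Units.ext ?_
            rw [Units.val_neg]
            linear_combination h1
      · rintro (rfl | rfl)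
        · right
          simp
        · right
          rw [Units.val_neg]
          ring
    have hδne : δ ≠ -δ := by
      intro h
      have h2 : (δ : ZMod p) = -(δ : ZMod p) := by
        conv_lhs => rw [h]
        rw [Units.val_neg]
      have h3 : (2 : ZMod p) * (δ : ZMod p) = 0 := by linear_combination h2
      have h4 : (2 : ZMod p) ≠ 0 := by
        intro h5
        have h6 := (ZMod.natCast_eq_zero_iff 2 p).mp (by exact_mod_cast h5)
        have := Nat.le_of_dvd (by norm_num) h6
        interval_cases p
        · exact hp2 rfl
      have h5 : (δ : ZMod p) ≠ 0 := δ.ne_zero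
      rcases mul_eq_zero.mp h3 with h | h
      · exact h4 h
      · exact h5 h
    -- reduce the sum to the pair {δ, -δ}
    have hpair : (χ (δ : ZMod p) * F (δ : ZMod p) ((p : ℂ) * τ)) * p
        + (χ ((-δ : (ZMod p)ˣ) : ZMod p) * F ((-δ : (ZMod p)ˣ) : ZMod p) ((p : ℂ) * τ)) * p
        = 0 := by
      rw [← key, Finset.sum_congr rfl (fun γ _ => by
        rw [if_congr (Iff.trans (hP γ) (by simp [Finset.mem_insert, Finset.mem_singleton] :
            (γ = δ ∨ γ = -δ) ↔ γ ∈ ({δ, -δ} : Finset (ZMod p)ˣ))) rfl rfl, mul_ite, mul_zero])]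
      rw [Finset.sum_ite_mem, Finset.univ_inter, Finset.sum_pair hδne]
    have hcoe : ((-δ : (ZMod p)ˣ) : ZMod p) = -(δ : ZMod p) := Units.val_neg δ
    rw [hcoe] at hpair
    rw [hsymm (δ : ZMod p) ((p : ℂ) * τ) hT] at hpair
    rw [show (-(δ : ZMod p)) = (-1) * (δ : ZMod p) by ring, map_mul, hχ] at hpair
    have hpair2 : χ (δ : ZMod p) * F (δ : ZMod p) ((p : ℂ) * τ) * (p : ℂ) * 2 = 0 := by
      linear_combination hpair - (χ (δ : ZMod p) * F (δ : ZMod p) ((p : ℂ) * τ) * (p : ℂ)) * hsq1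
    have hχδ : χ (δ : ZMod p) ≠ 0 := by
      have h1 : χ (δ : ZMod p) * χ ((δ⁻¹ : (ZMod p)ˣ) : ZMod p) = 1 := by
        rw [← map_mul]
        norm_cast
        rw [mul_inv_cancel]
        exact map_one χ
      exact left_ne_zero_of_mul_eq_one h1
    have h2' : (2 : ℂ) ≠ 0 := by norm_num
    rcases mul_eq_zero.mp hpair2 with h | h
    · rcases mul_eq_zero.mp h with h | h
      · rcases mul_eq_zero.mp h with h | h
        · exact absurd h hχδ
        · exact h
      · exact absurd h hpc
    · exact absurd h h2'
  -- nonzero components vanish everywhere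
  have hne : ∀ γ : ZMod p, γ ≠ 0 → ∀ τ : ℂ, 0 < τ.im → F γ τ = 0 := by
    intro γ hγ τ hτ
    have hu : IsUnit γ := isUnit_iff_ne_zero.mpr hγ
    obtain ⟨u, rfl⟩ := hu
    have hdiv : (p : ℂ) * (τ / p) = τ := by field_simp
    have him : 0 < (τ / (p : ℂ)).im := by
      rw [show (p : ℂ) = ((p : ℝ) : ℂ) by push_cast; rfl, Complex.div_ofReal_im]
      exact div_pos hτ (by exact_mod_cast hppos)
    rw [← hdiv]
    exact hunit u (τ / p) him
  -- Step D: the zero component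
  have h0S : ∀ τ : ℂ, 0 < τ.im → F 0 (-1 / τ)
      = ((legendreSym p α : ℂ) * εp p / Real.sqrt p) * τ ^ k * F 0 τ := by
    intro τ hτ
    rw [hS τ hτ]
    congr 1
    exact Fintype.sum_eq_single 0 fun β hβ => hne β hβ τ hτ
  set C : ℂ := (legendreSym p α : ℂ) * εp p / Real.sqrt p with hC
  have hLα : ‖((legendreSym p α : ℤ) : ℂ)‖ = 1 := by
    have h0 : ((α : ℤ) : ZMod p) ≠ 0 := by
      rw [Ne, ZMod.intCast_zmod_eq_zero_iff_dvd]
      exact hα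
    rcases legendreSym.eq_one_or_neg_one (p := p) h0 with h | h <;> rw [h] <;> simp
  have hε : ‖εp p‖ = 1 := by
    unfold εp
    split <;> simp
  have hsqrtpos : (0 : ℝ) < Real.sqrt p := Real.sqrt_pos.mpr (by exact_mod_cast hppos)
  have habsC : ‖C‖ = 1 / Real.sqrt p := by
    rw [hC, norm_div, norm_mul, hLα, hε, Complex.norm_real, Real.norm_eq_abs, abs_of_pos hsqrtpos, one_mul]
  have hF0 : ∀ τ : ℂ, 0 < τ.im → F 0 τ = 0 := by
    intro τ hτ
    have hτ0 : τ ≠ 0 := by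
      intro h
      rw [h] at hτ
      simp at hτ
    have hτ' : 0 < (-1 / τ : ℂ).im := by
      have him : (-1 / τ : ℂ).im = τ.im / Complex.normSq τ := by
        rw [show (-1 / τ : ℂ) = -τ⁻¹ by ring, Complex.neg_im, Complex.inv_im]
        ring
      rw [him]
      exact div_pos hτ (Complex.normSq_pos.mpr hτ0)
    have hinv : (-1 : ℂ) / (-1 / τ) = τ := by field_simp
    have e2 := h0S (-1 / τ) hτ'
    rw [hinv, h0S τ hτ] at e2
    have hmul : (-1 / τ : ℂ) ^ k * τ ^ k = (-1 : ℂ) ^ k := by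
      rw [← mul_zpow]
      congr 1
      field_simp
    have e3 : (1 - C * C * (-1 : ℂ) ^ k) * F 0 τ = 0 := by
      have h' : C * (-1 / τ : ℂ) ^ k * (C * τ ^ k * F 0 τ)
          = (C * C * (-1 : ℂ) ^ k) * F 0 τ := by
        rw [show C * (-1 / τ : ℂ) ^ k * (C * τ ^ k * F 0 τ)
            = (C * C) * ((-1 / τ : ℂ) ^ k * τ ^ k) * F 0 τ by ring, hmul]
      rw [h'] at e2
      linear_combination e2
    have hne1 : (1 : ℂ) - C * C * (-1 : ℂ) ^ k ≠ 0 := by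
      intro h
      have h1 : C * C * (-1 : ℂ) ^ k = 1 := by linear_combination -h
      have h2 := congrArg (‖·‖) h1
      have habsk : ‖((-1 : ℂ) ^ k)‖ = 1 := by
        rw [norm_zpow]
        simp
      rw [norm_mul, norm_mul, habsC, habsk, mul_one, norm_one] at h2
      have hsp : Real.sqrt p * Real.sqrt p = p := Real.mul_self_sqrt (by positivity)
      have h3 : (p : ℝ) = 1 := by
        have h5 : (1 : ℝ) / Real.sqrt p * (1 / Real.sqrt p) = 1 / (p : ℝ) := by
          rw [div_mul_div_comm, one_mul, hsp]
        rw [h5] at h2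
        field_simp at h2
        linarith
      have : (1 : ℝ) < (p : ℝ) := by exact_mod_cast hp1
      linarith
    rcases mul_eq_zero.mp e3 with h | h
    · exact absurd h hne1
    · exact h
  intro γ τ hτ
  by_cases hγ : γ = 0
  · rw [hγ]
    exact hF0 τ hτ
  · exact hne γ hγ τ hτ
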